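/- For m ≥ 4, the QE constant of the crown graph K_{m,m}^m equals m − 4. -/

import Mathlib

def Kmnt (m n t : ℕ) : SimpleGraph (Fin m ⊕ Fin n) :=
  SimpleGraph.fromRel (fun x y =>
    match x, y with
    | Sum.inl i, Sum.inr j => ¬((i : ℕ) = (j : ℕ) ∧ (i : ℕ) < t)
    | _, _ => False)

namespace CrownAux

variable {m : ℕ}

lemma adj_lr (i j : Fin m) : (Kmnt m m m).Adj (.inl i) (.inr j) ↔ i ≠ j := by
  simp only [Kmnt, SimpleGraph.fromRel_adj]
  constructor
  · rintro ⟨hne, h | h⟩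
    · intro hij; exact h ⟨by simp [hij], i.isLt⟩
    · exact absurd h (by simp)
  · intro hne
    refine ⟨by simp, Or.inl fun ⟨h, _⟩ => hne (Fin.ext h)⟩

lemma adj_rl (i j : Fin m) : (Kmnt m m m).Adj (.inr i) (.inl j) ↔ j ≠ i := by
  rw [SimpleGraph.adj_comm, adj_lr]

lemma not_adj_ll (i j : Fin m) : ¬ (Kmnt m m m).Adj (.inl i) (.inl j) := by
  simp [Kmnt, SimpleGraph.fromRel_adj]

lemma not_adj_rr (i j : Fin m) : ¬ (Kmnt m m m).Adj (.inr i) (.inr j) := by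
  simp [Kmnt, SimpleGraph.fromRel_adj]

lemma exists_third (hm : 4 ≤ m) (i j : Fin m) : ∃ k : Fin m, k ≠ i ∧ k ≠ j := by
  have h : ({i, j}ᶜ : Finset (Fin m)).Nonempty := by
    rw [← Finset.card_pos, Finset.card_compl]
    have h1 : ({i, j} : Finset (Fin m)).card ≤ 2 :=
      (Finset.card_insert_le _ _).trans (by simp)
    have h2 : Fintype.card (Fin m) = m := Fintype.card_fin m
    omega
  obtain ⟨k, hk⟩ := h
  simp only [Finset.mem_compl, Finset.mem_insert, Finset.mem_singleton, not_or] at hk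
  exact ⟨k, hk.1, hk.2⟩

lemma dist_lr_ne {i j : Fin m} (h : i ≠ j) : (Kmnt m m m).dist (.inl i) (.inr j) = 1 :=
  SimpleGraph.dist_eq_one_iff_adj.mpr ((adj_lr i j).mpr h)

lemma dist_ll (hm : 4 ≤ m) {i j : Fin m} (h : i ≠ j) :
    (Kmnt m m m).dist (.inl i) (.inl j) = 2 := by
  obtain ⟨k, hki, hkj⟩ := exists_third hm i j
  have a1 : (Kmnt m m m).Adj (.inl i) (.inr k) := (adj_lr i k).mpr (Ne.symm hki)
  have a2 : (Kmnt m m m).Adj (.inr k) (.inl j) := (adj_rl k j).mpr hkj.symm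
  have hle : (Kmnt m m m).dist (.inl i) (.inl j) ≤ 2 :=
    SimpleGraph.dist_le (.cons a1 (.cons a2 .nil))
  have h0 : (Kmnt m m m).dist (.inl i) (.inl j) ≠ 0 :=
    SimpleGraph.dist_ne_zero_iff_ne_and_reachable.mpr ⟨by simp [h], ⟨.cons a1 (.cons a2 .nil)⟩⟩
  have h1 : (Kmnt m m m).dist (.inl i) (.inl j) ≠ 1 := by
    simp only [ne_eq, SimpleGraph.dist_eq_one_iff_adj]
    exact not_adj_ll i j
  omega

lemma dist_rr (hm : 4 ≤ m) {i j : Fin m} (h : i ≠ j) :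
    (Kmnt m m m).dist (.inr i) (.inr j) = 2 := by
  obtain ⟨k, hki, hkj⟩ := exists_third hm i j
  have a1 : (Kmnt m m m).Adj (.inr i) (.inl k) := (adj_rl i k).mpr hki
  have a2 : (Kmnt m m m).Adj (.inl k) (.inr j) := (adj_lr k j).mpr hkj
  have hle : (Kmnt m m m).dist (.inr i) (.inr j) ≤ 2 :=
    SimpleGraph.dist_le (.cons a1 (.cons a2 .nil))
  have h0 : (Kmnt m m m).dist (.inr i) (.inr j) ≠ 0 :=
    SimpleGraph.dist_ne_zero_iff_ne_and_reachable.mpr ⟨by simp [h], ⟨.cons a1 (.cons a2 .nil)⟩⟩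
  have h1 : (Kmnt m m m).dist (.inr i) (.inr j) ≠ 1 := by
    simp only [ne_eq, SimpleGraph.dist_eq_one_iff_adj]
    exact not_adj_rr i j
  omega

lemma dist_lr_same (hm : 4 ≤ m) (i : Fin m) :
    (Kmnt m m m).dist (.inl i) (.inr i) = 3 := by
  obtain ⟨j, hji, -⟩ := exists_third hm i i
  obtain ⟨k, hki, hkj⟩ := exists_third hm i j
  have a1 : (Kmnt m m m).Adj (.inl i) (.inr j) := (adj_lr i j).mpr (Ne.symm hji)
  have a2 : (Kmnt m m m).Adj (.inr j) (.inl k) := (adj_rl j k).mpr hkj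
  have a3 : (Kmnt m m m).Adj (.inl k) (.inr i) := (adj_lr k i).mpr hki
  have hle : (Kmnt m m m).dist (.inl i) (.inr i) ≤ 3 :=
    SimpleGraph.dist_le (.cons a1 (.cons a2 (.cons a3 .nil)))
  have h0 : (Kmnt m m m).dist (.inl i) (.inr i) ≠ 0 :=
    SimpleGraph.dist_ne_zero_iff_ne_and_reachable.mpr
      ⟨by simp, ⟨.cons a1 (.cons a2 (.cons a3 .nil))⟩⟩
  have h1 : (Kmnt m m m).dist (.inl i) (.inr i) ≠ 1 := by
    simp only [ne_eq, SimpleGraph.dist_eq_one_iff_adj]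
    simp [adj_lr]
  have h2 : (Kmnt m m m).dist (.inl i) (.inr i) ≠ 2 := by
    intro hd
    obtain ⟨p, hp⟩ := SimpleGraph.exists_walk_of_dist_ne_zero h0
    rw [hd] at hp
    cases p with
    | cons h q =>
      rename_i b
      cases b with
      | inl c => exact not_adj_ll _ _ h
      | inr c =>
        cases q with
        | nil => simp at hp
        | cons h' q' =>
          rename_i b'
          cases b' with
          | inr d => exact not_adj_rr _ _ h'
          | inl d =>
            cases q' with
            | cons h'' q'' => simp at hp
  omega

end CrownAux

namespace CrownAux

lemma cast_ll (hm : 4 ≤ m) (i j : Fin m) :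
    (((Kmnt m m m).dist (.inl i) (.inl j) : ℕ) : ℝ) = if i = j then 0 else 2 := by
  rcases eq_or_ne i j with rfl | h
  · simp [SimpleGraph.dist_self]
  · simp [h, dist_ll hm h]

lemma cast_rr (hm : 4 ≤ m) (i j : Fin m) :
    (((Kmnt m m m).dist (.inr i) (.inr j) : ℕ) : ℝ) = if i = j then 0 else 2 := by
  rcases eq_or_ne i j with rfl | h
  · simp [SimpleGraph.dist_self]
  · simp [h, dist_rr hm h]

lemma cast_lr (hm : 4 ≤ m) (i j : Fin m) :
    (((Kmnt m m m).dist (.inl i) (.inr j) : ℕ) : ℝ) = if i = j then 3 else 1 := by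
  rcases eq_or_ne i j with rfl | h
  · simp [dist_lr_same hm i]
  · simp [h, dist_lr_ne h]

lemma cast_rl (hm : 4 ≤ m) (i j : Fin m) :
    (((Kmnt m m m).dist (.inr i) (.inl j) : ℕ) : ℝ) = if i = j then 3 else 1 := by
  rw [SimpleGraph.dist_comm, cast_lr hm]
  simp [eq_comm]

lemma block (c d : Fin m → ℝ) (u v : ℝ) :
    ∑ i, ∑ j, (if i = j then u else v) * c i * d j
      = v * ((∑ i, c i) * (∑ j, d j)) + (u - v) * ∑ i, c i * d i := by
  have h : ∀ i j : Fin m, (if i = j then u else v) * c i * d j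
      = v * (c i * d j) + (if i = j then (u - v) * (c i * d j) else 0) := by
    intro i j; rcases eq_or_ne i j with rfl | hne
    · simp; ring
    · simp [hne]; ring
  simp_rw [h, Finset.sum_add_distrib, Finset.sum_ite_eq, Finset.mem_univ, if_true,
    ← Finset.mul_sum, ← Finset.sum_mul]

lemma S_eq (hm : 4 ≤ m) (f : Fin m ⊕ Fin m → ℝ) :
    ∑ x, ∑ y, ((Kmnt m m m).dist x y : ℝ) * f x * f y
      = 2 * (∑ i, f (.inl i)) * (∑ i, f (.inl i))
        + 2 * (∑ i, f (.inr i)) * (∑ i, f (.inr i))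
        + 2 * ((∑ i, f (.inl i)) * (∑ i, f (.inr i)))
        - 2 * (∑ i, f (.inl i) * f (.inl i)) - 2 * (∑ i, f (.inr i) * f (.inr i))
        + 4 * (∑ i, f (.inl i) * f (.inr i)) := by
  simp only [Fintype.sum_sum_type]
  simp_rw [Finset.sum_add_distrib]
  simp_rw [cast_ll hm, cast_lr hm, cast_rl hm, cast_rr hm]
  rw [block (fun i => f (.inl i)) (fun j => f (.inl j)) 0 2,
    block (fun i => f (.inl i)) (fun j => f (.inr j)) 3 1,
    block (fun i => f (.inr i)) (fun j => f (.inl j)) 3 1,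
    block (fun i => f (.inr i)) (fun j => f (.inr j)) 0 2]
  have hcomm : ∑ i, f (Sum.inr i) * f (Sum.inl i) = ∑ i, f (Sum.inl i) * f (Sum.inr i) := by
    apply Finset.sum_congr rfl; intros; ring
  rw [hcomm]
  ring

end CrownAux

theorem stmt3 (m : ℕ) (hm : 4 ≤ m) :
    IsGreatest {r : ℝ | ∃ f : Fin m ⊕ Fin m → ℝ,
        (∑ x, f x ^ 2) = 1 ∧ (∑ x, f x) = 0 ∧
        r = ∑ x, ∑ y, ((Kmnt m m m).dist x y : ℝ) * f x * f y}
      ((m : ℝ) - 4) := by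
  have hm0 : (0:ℝ) < m := by positivity
  have hmR : (4:ℝ) ≤ m := by exact_mod_cast hm
  constructor
  · -- membership
    set c : ℝ := Real.sqrt (1 / (2 * m)) with hc
    have hc2 : c ^ 2 = 1 / (2 * m) := Real.sq_sqrt (by positivity)
    refine ⟨Sum.elim (fun _ => c) (fun _ => -c), ?_, ?_, ?_⟩
    · simp only [Fintype.sum_sum_type, Sum.elim_inl, Sum.elim_inr, neg_sq,
        Finset.sum_const, Finset.card_univ, Fintype.card_fin, nsmul_eq_mul]
      rw [hc2]
      field_simp
      ring
    · simp [Fintype.sum_sum_type, Finset.sum_const]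
    · rw [CrownAux.S_eq hm]
      simp only [Sum.elim_inl, Sum.elim_inr, Finset.sum_const, Finset.card_univ,
        Fintype.card_fin, nsmul_eq_mul, mul_neg, neg_mul, neg_neg]
      have hcc : (m:ℝ) * (c * c) = 1 / 2 := by
        rw [← pow_two, hc2]; field_simp
      linear_combination (8 - 2*(m:ℝ)) * hcc
  · rintro r ⟨f, hsq, hsum, rfl⟩
    rw [CrownAux.S_eq hm]
    rw [Fintype.sum_sum_type] at hsq hsum
    simp only [pow_two] at hsq
    have key := Finset.sum_mul_sq_le_sq_mul_sq Finset.univ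
      (fun i => f (.inl i) - f (.inr i)) (fun _ => (1:ℝ))
    simp only [mul_one, one_pow, Finset.sum_const, Finset.card_univ, Fintype.card_fin,
      nsmul_eq_mul] at key
    have e1 : ∑ i, (f (.inl i) - f (.inr i)) ^ 2
        = (∑ i, f (.inl i) * f (.inl i)) + (∑ i, f (.inr i) * f (.inr i))
          - 2 * ∑ i, f (.inl i) * f (.inr i) := by
      rw [← Finset.sum_add_distrib, Finset.mul_sum, ← Finset.sum_sub_distrib]
      apply Finset.sum_congr rfl; intros; ring
    have e2 : ∑ i, (f (.inl i) - f (.inr i))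
        = (∑ i, f (.inl i)) - (∑ i, f (.inr i)) := Finset.sum_sub_distrib _ _
    rw [e1, e2] at key
    have hpos : (0:ℝ) ≤ (∑ i, f (.inl i) * f (.inl i)) + (∑ i, f (.inr i) * f (.inr i))
        + 2 * ∑ i, f (.inl i) * f (.inr i) := by
      have : (0:ℝ) ≤ ∑ i, (f (.inl i) + f (.inr i)) ^ 2 :=
        Finset.sum_nonneg fun i _ => sq_nonneg _
      calc (0:ℝ) ≤ ∑ i, (f (.inl i) + f (.inr i)) ^ 2 := this
        _ = _ := by
          rw [← Finset.sum_add_distrib, Finset.mul_sum, ← Finset.sum_add_distrib]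
          apply Finset.sum_congr rfl; intros; ring
    set A := ∑ i, f (.inl i)
    set B := ∑ i, f (.inr i)
    set Pa := ∑ i, f (.inl i) * f (.inl i)
    set Pb := ∑ i, f (.inr i) * f (.inr i)
    set Pab := ∑ i, f (.inl i) * f (.inr i)
    have hB : B = -A := by linarith
    have hP : Pa + Pb = 1 := hsq
    nlinarith [key, hpos, hB, hP, hmR, mul_nonneg (by linarith : (0:ℝ) ≤ (m:ℝ) - 4)
      (by nlinarith : (0:ℝ) ≤ 2 - (Pa + Pb - 2 * Pab)), sq_nonneg (A - B)]
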